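/- Completeness of proof-relevant possible-world semantics for MLC: for any two terms Γ ⊢ t : A and Γ ⊢ u : A of MLC, if ⟦t⟧ = ⟦u⟧ in every proof-relevant possible-world model determined by an MLC-frame, then Γ ⊢ t ≡ u : A in the equational theory of MLC. -/

import Mathlib

open CategoryTheory

/-- Types of MLC. -/
inductive Ty : Type
  | base : Ty
  | unit : Ty
  | prod : Ty → Ty → Ty
  | arr : Ty → Ty → Ty
  | dia : Ty → Ty

/-- Typing contexts (the head is the most recently bound variable). -/
abbrev Ctx := List Ty

/-- Typed de Bruijn variables: `Var Γ A` witnesses that `x : A` occurs in `Γ`. -/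
inductive Var : Ctx → Ty → Type
  | zero {Γ A} : Var (A :: Γ) A
  | succ {Γ A B} : Var Γ A → Var (B :: Γ) A

/-- Well-typed terms of MLC (intrinsically typed): `Tm Γ A` is the type of
typing derivations `Γ ⊢ t : A`. -/
inductive Tm : Ctx → Ty → Type
  | var {Γ A} : Var Γ A → Tm Γ A
  | unit {Γ} : Tm Γ .unit
  | pair {Γ A B} : Tm Γ A → Tm Γ B → Tm Γ (.prod A B)
  | fst {Γ A B} : Tm Γ (.prod A B) → Tm Γ A
  | snd {Γ A B} : Tm Γ (.prod A B) → Tm Γ B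
  | lam {Γ A B} : Tm (A :: Γ) B → Tm Γ (.arr A B)
  | app {Γ A B} : Tm Γ (.arr A B) → Tm Γ A → Tm Γ B
  | ret {Γ A} : Tm Γ A → Tm Γ (.dia A)
  | lett {Γ A B} : Tm Γ (.dia A) → Tm (A :: Γ) (.dia B) → Tm Γ (.dia B)

/-- Order-preserving embeddings of contexts. -/
inductive OPE : Ctx → Ctx → Type
  | nil : OPE [] []
  | drop {Γ Γ'} (A : Ty) : OPE Γ Γ' → OPE Γ (A :: Γ')
  | keep {Γ Γ'} (A : Ty) : OPE (Γ) (Γ') → OPE (A :: Γ) (A :: Γ')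

/-- The identity embedding. -/
def OPE.id : ∀ (Γ : Ctx), OPE Γ Γ
  | [] => .nil
  | A :: Γ => .keep A (OPE.id Γ)

/-- Action of an embedding on variables. -/
def OPE.var : ∀ {Γ Γ' : Ctx} {A : Ty}, OPE Γ Γ' → Var Γ A → Var Γ' A
  | _, _, _, .drop _ ρ, x => .succ (ρ.var x)
  | _, _, _, .keep _ _, .zero => .zero
  | _, _, _, .keep _ ρ, .succ x => .succ (ρ.var x)

/-- Weakening (renaming) of terms along an embedding. -/
def Tm.rename : ∀ {Γ Γ' : Ctx} {A : Ty}, OPE Γ Γ' → Tm Γ A → Tm Γ' A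
  | _, _, _, ρ, .var x => .var (ρ.var x)
  | _, _, _, _, .unit => .unit
  | _, _, _, ρ, .pair t u => .pair (t.rename ρ) (u.rename ρ)
  | _, _, _, ρ, .fst t => .fst (t.rename ρ)
  | _, _, _, ρ, .snd t => .snd (t.rename ρ)
  | _, _, _, ρ, .lam (A := A) t => .lam (t.rename (.keep A ρ))
  | _, _, _, ρ, .app t u => .app (t.rename ρ) (u.rename ρ)
  | _, _, _, ρ, .ret t => .ret (t.rename ρ)
  | _, _, _, ρ, .lett (A := A) t u => .lett (t.rename ρ) (u.rename (.keep A ρ))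

/-- Simultaneous substitutions. -/
def Subst (Γ Δ : Ctx) : Type := ∀ (A : Ty), Var Γ A → Tm Δ A

/-- Lifting a substitution under a binder. -/
def Subst.lift {Γ Δ : Ctx} (A : Ty) (σ : Subst Γ Δ) : ∀ (B : Ty), Var (A :: Γ) B → Tm (A :: Δ) B
  | _, .zero => .var .zero
  | _, .succ y => (σ _ y).rename (.drop A (OPE.id Δ))

/-- Action of a substitution on terms. -/
def Tm.subst : ∀ {Γ Δ : Ctx} {A : Ty}, Subst Γ Δ → Tm Γ A → Tm Δ A
  | _, _, _, σ, .var x => σ _ x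
  | _, _, _, _, .unit => .unit
  | _, _, _, σ, .pair t u => .pair (t.subst σ) (u.subst σ)
  | _, _, _, σ, .fst t => .fst (t.subst σ)
  | _, _, _, σ, .snd t => .snd (t.subst σ)
  | _, _, _, σ, .lam (A := A) t => .lam (t.subst (σ.lift A))
  | _, _, _, σ, .app t u => .app (t.subst σ) (u.subst σ)
  | _, _, _, σ, .ret t => .ret (t.subst σ)
  | _, _, _, σ, .lett (A := A) t u => .lett (t.subst σ) (u.subst (σ.lift A))

/-- The substitution sending the last-bound variable to `u` and every other
variable to itself. -/
def Subst.single {Γ : Ctx} {A : Ty} (u : Tm Γ A) : ∀ (B : Ty), Var (A :: Γ) B → Tm Γ B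
  | _, .zero => u
  | _, .succ y => .var y

/-- Substitution of a single term for the last-bound variable. -/
def subst0 {Γ : Ctx} {A B : Ty} (u : Tm Γ A) (t : Tm (A :: Γ) B) : Tm Γ B :=
  t.subst (Subst.single u)

/-- Weakening of a term by one fresh variable. -/
def wk1 {Γ : Ctx} {A B : Ty} (t : Tm Γ A) : Tm (B :: Γ) A :=
  t.rename (.drop B (OPE.id Γ))

/-- The equational theory `Γ ⊢ t ≡ u : A` of MLC. -/
inductive EqTm : ∀ {Γ : Ctx} {A : Ty}, Tm Γ A → Tm Γ A → Prop
  | refl {Γ A} (t : Tm Γ A) : EqTm t t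
  | symm {Γ A} {t u : Tm Γ A} : EqTm t u → EqTm u t
  | trans {Γ A} {t u v : Tm Γ A} : EqTm t u → EqTm u v → EqTm t v
  | pair_congr {Γ A B} {t t' : Tm Γ A} {u u' : Tm Γ B} :
      EqTm t t' → EqTm u u' → EqTm (.pair t u) (.pair t' u')
  | fst_congr {Γ A B} {t t' : Tm Γ (.prod A B)} : EqTm t t' → EqTm (.fst t) (.fst t')
  | snd_congr {Γ A B} {t t' : Tm Γ (.prod A B)} : EqTm t t' → EqTm (.snd t) (.snd t')
  | lam_congr {Γ A B} {t t' : Tm (A :: Γ) B} : EqTm t t' → EqTm (.lam t) (.lam t')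
  | app_congr {Γ A B} {t t' : Tm Γ (.arr A B)} {u u' : Tm Γ A} :
      EqTm t t' → EqTm u u' → EqTm (.app t u) (.app t' u')
  | ret_congr {Γ A} {t t' : Tm Γ A} : EqTm t t' → EqTm (.ret t) (.ret t')
  | lett_congr {Γ A B} {t t' : Tm Γ (.dia A)} {u u' : Tm (A :: Γ) (.dia B)} :
      EqTm t t' → EqTm u u' → EqTm (.lett t u) (.lett t' u')
  | unit_eta {Γ} (t : Tm Γ .unit) : EqTm t .unit
  | prod_beta1 {Γ A B} (t : Tm Γ A) (u : Tm Γ B) : EqTm (.fst (.pair t u)) t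
  | prod_beta2 {Γ A B} (t : Tm Γ A) (u : Tm Γ B) : EqTm (.snd (.pair t u)) u
  | prod_eta {Γ A B} (t : Tm Γ (.prod A B)) : EqTm t (.pair (.fst t) (.snd t))
  | arr_beta {Γ A B} (t : Tm (A :: Γ) B) (u : Tm Γ A) :
      EqTm (.app (.lam t) u) (subst0 u t)
  | arr_eta {Γ A B} (t : Tm Γ (.arr A B)) :
      EqTm t (.lam (.app (wk1 t) (.var .zero)))
  | dia_beta {Γ A B} (t : Tm Γ A) (u : Tm (A :: Γ) (.dia B)) :
      EqTm (.lett (.ret t) u) (subst0 t u)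
  | dia_eta {Γ A} (t : Tm Γ (.dia A)) : EqTm t (.lett t (.ret (.var .zero)))
  | dia_ass {Γ A B C} (t : Tm Γ (.dia A)) (u : Tm (A :: Γ) (.dia B))
      (u' : Tm (B :: Γ) (.dia C)) :
      EqTm (.lett (.lett t u) u')
        (.lett t (.lett u (u'.rename (.keep B (.drop A (OPE.id Γ))))))

/-- A proof-relevant MLC-frame. -/
structure MLCFrame where
  W : Type
  [instCat : Category.{0} W]
  R : W → W → Type
  incl : ∀ {w v : W}, R w v → (w ⟶ v)
  factorW : ∀ {w w' v : W}, (w ⟶ w') → R w v → W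
  factor₁ : ∀ {w w' v : W} (i : w ⟶ w') (m : R w v), R w' (factorW i m)
  factor₂ : ∀ {w w' v : W} (i : w ⟶ w') (m : R w v), v ⟶ factorW i m
  reflR : ∀ w : W, R w w
  transR : ∀ {u v w : W}, R u v → R v w → R u w
  factorW_id : ∀ {w v : W} (m : R w v), factorW (𝟙 w) m = v
  factor₁_id : ∀ {w v : W} (m : R w v), HEq (factor₁ (𝟙 w) m) m
  factor₂_id : ∀ {w v : W} (m : R w v), HEq (factor₂ (𝟙 w) m) (𝟙 v)
  factorW_comp : ∀ {w w' w'' v : W} (i : w ⟶ w') (j : w' ⟶ w'') (m : R w v),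
    factorW (i ≫ j) m = factorW j (factor₁ i m)
  factor₁_comp : ∀ {w w' w'' v : W} (i : w ⟶ w') (j : w' ⟶ w'') (m : R w v),
    HEq (factor₁ (i ≫ j) m) (factor₁ j (factor₁ i m))
  factor₂_comp : ∀ {w w' w'' v : W} (i : w ⟶ w') (j : w' ⟶ w'') (m : R w v),
    HEq (factor₂ (i ≫ j) m) (factor₂ i m ≫ factor₂ j (factor₁ i m))
  incl_natural : ∀ {w w' v : W} (i : w ⟶ w') (m : R w v),
    incl m ≫ factor₂ i m = i ≫ incl (factor₁ i m)
  factorW_refl : ∀ {w w' : W} (i : w ⟶ w'), factorW i (reflR w) = w'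
  factor₁_refl : ∀ {w w' : W} (i : w ⟶ w'), HEq (factor₁ i (reflR w)) (reflR w')
  factor₂_refl : ∀ {w w' : W} (i : w ⟶ w'), HEq (factor₂ i (reflR w)) i
  incl_refl : ∀ w : W, incl (reflR w) = 𝟙 w
  factorW_trans : ∀ {w w' u v : W} (i : w ⟶ w') (m₁ : R w u) (m₂ : R u v),
    factorW i (transR m₁ m₂) = factorW (factor₂ i m₁) m₂
  factor₁_trans : ∀ {w w' u v : W} (i : w ⟶ w') (m₁ : R w u) (m₂ : R u v),
    HEq (factor₁ i (transR m₁ m₂))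
        (transR (factor₁ i m₁) (factor₁ (factor₂ i m₁) m₂))
  factor₂_trans : ∀ {w w' u v : W} (i : w ⟶ w') (m₁ : R w u) (m₂ : R u v),
    HEq (factor₂ i (transR m₁ m₂)) (factor₂ (factor₂ i m₁) m₂)
  transR_assoc : ∀ {u v w x : W} (m₁ : R u v) (m₂ : R v w) (m₃ : R w x),
    transR (transR m₁ m₂) m₃ = transR m₁ (transR m₂ m₃)
  transR_refl_left : ∀ {w v : W} (m : R w v), transR (reflR w) m = m
  transR_refl_right : ∀ {w v : W} (m : R w v), transR m (reflR v) = m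
  incl_trans : ∀ {u v w : W} (m₁ : R u v) (m₂ : R v w),
    incl (transR m₁ m₂) = incl m₁ ≫ incl m₂

attribute [instance] MLCFrame.instCat

variable (F : MLCFrame) (Vι : F.W ⥤ Type)

/-- Interpretation of types as presheaves (object parts). -/
def evalTy : Ty → F.W → Type
  | .base, w => Vι.obj w
  | .unit, _ => PUnit
  | .prod A B, w => evalTy A w × evalTy B w
  | .arr A B, w => ∀ w' : F.W, (w ⟶ w') → evalTy A w' → evalTy B w'
  | .dia A, w => Σ v : F.W, F.R w v × evalTy A v

/-- Transport of the interpretation of a type along `i : w ⟶ w'`. -/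
def tpTy : ∀ (A : Ty) {w w' : F.W}, (w ⟶ w') → evalTy F Vι A w → evalTy F Vι A w'
  | .base, _, _, i, a => Vι.map i a
  | .unit, _, _, _, _ => PUnit.unit
  | .prod A B, _, _, i, a => (tpTy A i a.1, tpTy B i a.2)
  | .arr _ _, _, _, i, f => fun w'' j a => f w'' (i ≫ j) a
  | .dia A, _, _, i, a =>
      ⟨F.factorW i a.2.1, F.factor₁ i a.2.1, tpTy A (F.factor₂ i a.2.1) a.2.2⟩

/-- Interpretation of contexts (object parts). -/
def evalCtx : Ctx → F.W → Type
  | [], _ => PUnit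
  | A :: Γ, w => evalCtx Γ w × evalTy F Vι A w

/-- Transport of the interpretation of a context along `i : w ⟶ w'`. -/
def tpCtx : ∀ (Γ : Ctx) {w w' : F.W}, (w ⟶ w') → evalCtx F Vι Γ w → evalCtx F Vι Γ w'
  | [], _, _, _, _ => PUnit.unit
  | A :: Γ, _, _, i, γ => (tpCtx Γ i γ.1, tpTy F Vι A i γ.2)

/-- Interpretation of variables: projection out of the environment. -/
def evalVar : ∀ {Γ : Ctx} {A : Ty}, Var Γ A → ∀ {w : F.W}, evalCtx F Vι Γ w → evalTy F Vι A w
  | _, _, .zero, _, γ => γ.2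
  | _, _, .succ x, _, γ => evalVar x γ.1

/-- Interpretation of terms. -/
def evalTm : ∀ {Γ : Ctx} {A : Ty}, Tm Γ A → ∀ w : F.W, evalCtx F Vι Γ w → evalTy F Vι A w
  | _, _, .var x, _, γ => evalVar F Vι x γ
  | _, _, .unit, _, _ => PUnit.unit
  | _, _, .pair t u, w, γ => (evalTm t w γ, evalTm u w γ)
  | _, _, .fst t, w, γ => (evalTm t w γ).1
  | _, _, .snd t, w, γ => (evalTm t w γ).2
  | _, _, .lam t, _, γ => fun w' i a => evalTm t w' (tpCtx F Vι _ i γ, a)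
  | _, _, .app t u, w, γ => evalTm t w γ w (𝟙 w) (evalTm u w γ)
  | _, _, .ret t, w, γ => ⟨w, F.reflR w, evalTm t w γ⟩
  | _, _, .lett t u, w, γ =>
      let x := evalTm t w γ
      let y := evalTm u x.1 (tpCtx F Vι _ (F.incl x.2.1) γ, x.2.2)
      ⟨y.1, F.transR x.2.1 y.2.1, y.2.2⟩

/-! ### Auxiliary syntactic development -/

def OPE.comp : ∀ {Γ Δ Θ : Ctx}, OPE Γ Δ → OPE Δ Θ → OPE Γ Θ
  | _, _, _, ρ, .drop A ρ' => .drop A (OPE.comp ρ ρ')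
  | _, _, _, .nil, .nil => .nil
  | _, _, _, .drop A ρ, .keep _ ρ' => .drop A (OPE.comp ρ ρ')
  | _, _, _, .keep A ρ, .keep _ ρ' => .keep A (OPE.comp ρ ρ')

theorem OPE.comp_id : ∀ {Γ Δ : Ctx} (ρ : OPE Γ Δ), ρ.comp (OPE.id Δ) = ρ
  | _, _, .nil => rfl
  | _, _, .drop A ρ => by simp [OPE.id, OPE.comp, OPE.comp_id ρ]
  | _, _, .keep A ρ => by simp [OPE.id, OPE.comp, OPE.comp_id ρ]

theorem OPE.id_comp : ∀ {Γ Δ : Ctx} (ρ : OPE Γ Δ), (OPE.id Γ).comp ρ = ρ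
  | _, _, .nil => rfl
  | _, _, .drop A ρ => by simp [OPE.id, OPE.comp, OPE.id_comp ρ]
  | _, _, .keep A ρ => by simp [OPE.id, OPE.comp, OPE.id_comp ρ]

theorem OPE.comp_assoc : ∀ {Γ Δ Θ Ξ : Ctx} (ρ₁ : OPE Γ Δ) (ρ₂ : OPE Δ Θ) (ρ₃ : OPE Θ Ξ),
    (ρ₁.comp ρ₂).comp ρ₃ = ρ₁.comp (ρ₂.comp ρ₃)
  | _, _, _, _, ρ₁, ρ₂, .drop A ρ₃ => by simp [OPE.comp, OPE.comp_assoc ρ₁ ρ₂ ρ₃]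
  | _, _, _, _, ρ₁, .drop A ρ₂, .keep _ ρ₃ => by simp [OPE.comp, OPE.comp_assoc ρ₁ ρ₂ ρ₃]
  | _, _, _, _, .drop A ρ₁, .keep _ ρ₂, .keep _ ρ₃ => by
      simp [OPE.comp, OPE.comp_assoc ρ₁ ρ₂ ρ₃]
  | _, _, _, _, .keep A ρ₁, .keep _ ρ₂, .keep _ ρ₃ => by
      simp [OPE.comp, OPE.comp_assoc ρ₁ ρ₂ ρ₃]
  | _, _, _, _, .nil, .nil, .nil => rfl

theorem OPE.var_id : ∀ {Γ : Ctx} {A : Ty} (x : Var Γ A), (OPE.id Γ).var x = x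
  | _, _, .zero => rfl
  | _, _, .succ x => by simp [OPE.id, OPE.var, OPE.var_id x]

theorem OPE.var_comp : ∀ {Γ Δ Θ : Ctx} {A : Ty} (ρ : OPE Γ Δ) (ρ' : OPE Δ Θ) (x : Var Γ A),
    (ρ.comp ρ').var x = ρ'.var (ρ.var x)
  | _, _, _, _, ρ, .drop A ρ', x => by simp [OPE.comp, OPE.var, OPE.var_comp ρ ρ' x]
  | _, _, _, _, .drop A ρ, .keep _ ρ', x => by simp [OPE.comp, OPE.var, OPE.var_comp ρ ρ' x]
  | _, _, _, _, .nil, .nil, x => nomatch x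
  | _, _, _, _, .keep A ρ, .keep _ ρ', .zero => rfl
  | _, _, _, _, .keep A ρ, .keep _ ρ', .succ x => by
      simp [OPE.comp, OPE.var, OPE.var_comp ρ ρ' x]

theorem Tm.rename_id : ∀ {Γ : Ctx} {A : Ty} (t : Tm Γ A), t.rename (OPE.id Γ) = t
  | _, _, .var x => by simp [Tm.rename, OPE.var_id]
  | _, _, .unit => rfl
  | _, _, .pair t u => by simp [Tm.rename, Tm.rename_id t, Tm.rename_id u]
  | _, _, .fst t => by simp [Tm.rename, Tm.rename_id t]
  | _, _, .snd t => by simp [Tm.rename, Tm.rename_id t]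
  | _, _, .lam t => by simp [Tm.rename, OPE.id]; exact Tm.rename_id t
  | _, _, .app t u => by simp [Tm.rename, Tm.rename_id t, Tm.rename_id u]
  | _, _, .ret t => by simp [Tm.rename, Tm.rename_id t]
  | _, _, .lett t u => by
      simp [Tm.rename, Tm.rename_id t]; exact Tm.rename_id u

theorem Tm.rename_comp : ∀ {Γ Δ Θ : Ctx} {A : Ty} (ρ : OPE Γ Δ) (ρ' : OPE Δ Θ) (t : Tm Γ A),
    (t.rename ρ).rename ρ' = t.rename (ρ.comp ρ')
  | _, _, _, _, ρ, ρ', .var x => by simp [Tm.rename, OPE.var_comp]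
  | _, _, _, _, _, _, .unit => rfl
  | _, _, _, _, ρ, ρ', .pair t u => by
      simp [Tm.rename, Tm.rename_comp ρ ρ' t, Tm.rename_comp ρ ρ' u]
  | _, _, _, _, ρ, ρ', .fst t => by simp [Tm.rename, Tm.rename_comp ρ ρ' t]
  | _, _, _, _, ρ, ρ', .snd t => by simp [Tm.rename, Tm.rename_comp ρ ρ' t]
  | _, _, _, _, ρ, ρ', .lam t => by
      simp [Tm.rename]; exact Tm.rename_comp (.keep _ ρ) (.keep _ ρ') t
  | _, _, _, _, ρ, ρ', .app t u => by
      simp [Tm.rename, Tm.rename_comp ρ ρ' t, Tm.rename_comp ρ ρ' u]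
  | _, _, _, _, ρ, ρ', .ret t => by simp [Tm.rename, Tm.rename_comp ρ ρ' t]
  | _, _, _, _, ρ, ρ', .lett t u => by
      simp [Tm.rename, Tm.rename_comp ρ ρ' t]
      exact Tm.rename_comp (.keep _ ρ) (.keep _ ρ') u
theorem Subst.lift_ren {Γ Δ Θ : Ctx} (A : Ty) (ρ : OPE Γ Δ) (σ : Subst Δ Θ) :
    (fun B x => (σ.lift A) B ((OPE.keep A ρ).var x)) =
      Subst.lift (Γ := Γ) A (fun B x => σ B (ρ.var x)) := by
  funext B x; cases x <;> rfl

theorem Tm.ren_sub : ∀ {Γ Δ Θ : Ctx} {A : Ty} (ρ : OPE Γ Δ) (σ : Subst Δ Θ) (t : Tm Γ A),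
    (t.rename ρ).subst σ = t.subst (fun B x => σ B (ρ.var x))
  | _, _, _, _, ρ, σ, .var x => rfl
  | _, _, _, _, _, _, .unit => rfl
  | _, _, _, _, ρ, σ, .pair t u => by
      simp [Tm.rename, Tm.subst, Tm.ren_sub ρ σ t, Tm.ren_sub ρ σ u]
  | _, _, _, _, ρ, σ, .fst t => by simp [Tm.rename, Tm.subst, Tm.ren_sub ρ σ t]
  | _, _, _, _, ρ, σ, .snd t => by simp [Tm.rename, Tm.subst, Tm.ren_sub ρ σ t]
  | _, _, _, _, ρ, σ, .lam t => by
      simp [Tm.rename, Tm.subst, Tm.ren_sub (.keep _ ρ) (σ.lift _) t, Subst.lift_ren]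
  | _, _, _, _, ρ, σ, .app t u => by
      simp [Tm.rename, Tm.subst, Tm.ren_sub ρ σ t, Tm.ren_sub ρ σ u]
  | _, _, _, _, ρ, σ, .ret t => by simp [Tm.rename, Tm.subst, Tm.ren_sub ρ σ t]
  | _, _, _, _, ρ, σ, .lett t u => by
      simp [Tm.rename, Tm.subst, Tm.ren_sub ρ σ t,
        Tm.ren_sub (.keep _ ρ) (σ.lift _) u, Subst.lift_ren]

theorem Subst.ren_lift {Γ Δ Θ : Ctx} (A : Ty) (σ : Subst Γ Δ) (ρ : OPE Δ Θ) :
    (fun B x => ((σ.lift A) B x).rename (OPE.keep A ρ)) =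
      Subst.lift (Γ := Γ) A (fun B x => (σ B x).rename ρ) := by
  funext B x; cases x with
  | zero => rfl
  | succ y =>
      show ((σ _ y).rename (.drop A (OPE.id _))).rename (.keep A ρ) =
        ((σ _ y).rename ρ).rename (.drop A (OPE.id _))
      rw [Tm.rename_comp, Tm.rename_comp]
      simp [OPE.comp, OPE.id_comp, OPE.comp_id]

theorem Tm.sub_ren : ∀ {Γ Δ Θ : Ctx} {A : Ty} (σ : Subst Γ Δ) (ρ : OPE Δ Θ) (t : Tm Γ A),
    (t.subst σ).rename ρ = t.subst (fun B x => (σ B x).rename ρ)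
  | _, _, _, _, σ, ρ, .var x => rfl
  | _, _, _, _, _, _, .unit => rfl
  | _, _, _, _, σ, ρ, .pair t u => by
      simp [Tm.rename, Tm.subst, Tm.sub_ren σ ρ t, Tm.sub_ren σ ρ u]
  | _, _, _, _, σ, ρ, .fst t => by simp [Tm.rename, Tm.subst, Tm.sub_ren σ ρ t]
  | _, _, _, _, σ, ρ, .snd t => by simp [Tm.rename, Tm.subst, Tm.sub_ren σ ρ t]
  | _, _, _, _, σ, ρ, .lam t => by
      simp [Tm.rename, Tm.subst, Tm.sub_ren (σ.lift _) (.keep _ ρ) t, Subst.ren_lift]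
  | _, _, _, _, σ, ρ, .app t u => by
      simp [Tm.rename, Tm.subst, Tm.sub_ren σ ρ t, Tm.sub_ren σ ρ u]
  | _, _, _, _, σ, ρ, .ret t => by simp [Tm.rename, Tm.subst, Tm.sub_ren σ ρ t]
  | _, _, _, _, σ, ρ, .lett t u => by
      simp [Tm.rename, Tm.subst, Tm.sub_ren σ ρ t,
        Tm.sub_ren (σ.lift _) (.keep _ ρ) u, Subst.ren_lift]

theorem Subst.lift_lift {Γ Δ Θ : Ctx} (A : Ty) (σ : Subst Γ Δ) (τ : Subst Δ Θ) :
    (fun B x => ((σ.lift A) B x).subst (τ.lift A)) =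
      Subst.lift (Γ := Γ) A (fun B x => (σ B x).subst τ) := by
  funext B x; cases x with
  | zero => rfl
  | succ y =>
      show ((σ _ y).rename (.drop A (OPE.id _))).subst (τ.lift A) =
        ((σ _ y).subst τ).rename (.drop A (OPE.id _))
      erw [Tm.ren_sub, Tm.sub_ren]
      congr 1; funext B x
      show Subst.lift A τ B (.succ ((OPE.id _).var x)) = (τ B x).rename (.drop A (OPE.id _))
      rw [OPE.var_id]; rfl

theorem Tm.sub_sub : ∀ {Γ Δ Θ : Ctx} {A : Ty} (σ : Subst Γ Δ) (τ : Subst Δ Θ) (t : Tm Γ A),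
    (t.subst σ).subst τ = t.subst (fun B x => (σ B x).subst τ)
  | _, _, _, _, σ, τ, .var x => rfl
  | _, _, _, _, _, _, .unit => rfl
  | _, _, _, _, σ, τ, .pair t u => by
      simp [Tm.subst, Tm.sub_sub σ τ t, Tm.sub_sub σ τ u]
  | _, _, _, _, σ, τ, .fst t => by simp [Tm.subst, Tm.sub_sub σ τ t]
  | _, _, _, _, σ, τ, .snd t => by simp [Tm.subst, Tm.sub_sub σ τ t]
  | _, _, _, _, σ, τ, .lam t => by
      simp [Tm.subst, Tm.sub_sub (σ.lift _) (τ.lift _) t, Subst.lift_lift]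
  | _, _, _, _, σ, τ, .app t u => by
      simp [Tm.subst, Tm.sub_sub σ τ t, Tm.sub_sub σ τ u]
  | _, _, _, _, σ, τ, .ret t => by simp [Tm.subst, Tm.sub_sub σ τ t]
  | _, _, _, _, σ, τ, .lett t u => by
      simp [Tm.subst, Tm.sub_sub σ τ t, Tm.sub_sub (σ.lift _) (τ.lift _) u, Subst.lift_lift]

/-- The identity substitution. -/
def Subst.idS (Γ : Ctx) : Subst Γ Γ := fun _ x => .var x

theorem Subst.lift_id {Γ : Ctx} (A : Ty) : Subst.lift A (Subst.idS Γ) = Subst.idS (A :: Γ) := by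
  funext B x; cases x with
  | zero => rfl
  | succ y =>
      show Tm.rename (.drop A (OPE.id Γ)) (.var y) = .var y.succ
      simp [Tm.rename, OPE.var, OPE.var_id]

theorem Tm.subst_id : ∀ {Γ : Ctx} {A : Ty} (t : Tm Γ A), t.subst (Subst.idS Γ) = t
  | _, _, .var x => rfl
  | _, _, .unit => rfl
  | _, _, .pair t u => by simp [Tm.subst, Tm.subst_id t, Tm.subst_id u]
  | _, _, .fst t => by simp [Tm.subst, Tm.subst_id t]
  | _, _, .snd t => by simp [Tm.subst, Tm.subst_id t]
  | _, _, .lam t => by simp [Tm.subst, Subst.lift_id, Tm.subst_id t]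
  | _, _, .app t u => by simp [Tm.subst, Tm.subst_id t, Tm.subst_id u]
  | _, _, .ret t => by simp [Tm.subst, Tm.subst_id t]
  | _, _, .lett t u => by simp [Tm.subst, Subst.lift_id, Tm.subst_id t, Tm.subst_id u]
theorem Tm.rename_subst0 {Γ Δ : Ctx} {A B : Ty} (ρ : OPE Γ Δ) (u : Tm Γ A) (t : Tm (A :: Γ) B) :
    (subst0 u t).rename ρ = subst0 (u.rename ρ) (t.rename (.keep A ρ)) := by
  unfold subst0
  erw [Tm.sub_ren, Tm.ren_sub]
  congr 1; funext B x
  cases x <;> simp [Subst.single, OPE.var, Tm.rename]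

theorem Tm.rename_wk1 {Γ Δ : Ctx} {A B : Ty} (ρ : OPE Γ Δ) (t : Tm Γ A) :
    (wk1 (B := B) t).rename (.keep B ρ) = wk1 (t.rename ρ) := by
  unfold wk1
  rw [Tm.rename_comp, Tm.rename_comp]
  simp [OPE.comp, OPE.id_comp, OPE.comp_id]

theorem Tm.rename_exch {Γ Δ : Ctx} {A B C : Ty} (ρ : OPE Γ Δ) (u' : Tm (B :: Γ) C) :
    (u'.rename (.keep B (.drop A (OPE.id Γ)))).rename (.keep B (.keep A ρ)) =
      (u'.rename (.keep B ρ)).rename (.keep B (.drop A (OPE.id Δ))) := by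
  rw [Tm.rename_comp, Tm.rename_comp]
  simp [OPE.comp, OPE.id_comp, OPE.comp_id]

theorem EqTm.rename : ∀ {Γ : Ctx} {A : Ty} {t u : Tm Γ A}, EqTm t u →
    ∀ {Δ : Ctx} (ρ : OPE Γ Δ), EqTm (t.rename ρ) (u.rename ρ) := by
  intro Γ A t u h
  induction h with
  | refl t => exact fun ρ => .refl _
  | symm _ ih => exact fun ρ => .symm (ih ρ)
  | trans _ _ ih₁ ih₂ => exact fun ρ => .trans (ih₁ ρ) (ih₂ ρ)
  | pair_congr _ _ ih₁ ih₂ => exact fun ρ => .pair_congr (ih₁ ρ) (ih₂ ρ)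
  | fst_congr _ ih => exact fun ρ => .fst_congr (ih ρ)
  | snd_congr _ ih => exact fun ρ => .snd_congr (ih ρ)
  | lam_congr _ ih => exact fun ρ => .lam_congr (ih (.keep _ ρ))
  | app_congr _ _ ih₁ ih₂ => exact fun ρ => .app_congr (ih₁ ρ) (ih₂ ρ)
  | ret_congr _ ih => exact fun ρ => .ret_congr (ih ρ)
  | lett_congr _ _ ih₁ ih₂ => exact fun ρ => .lett_congr (ih₁ ρ) (ih₂ (.keep _ ρ))
  | unit_eta t => exact fun ρ => .unit_eta _
  | prod_beta1 t u => exact fun ρ => .prod_beta1 _ _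
  | prod_beta2 t u => exact fun ρ => .prod_beta2 _ _
  | prod_eta t => exact fun ρ => .prod_eta _
  | arr_beta t u =>
      intro Δ ρ
      rw [show (Tm.app (.lam t) u).rename ρ = .app (.lam (t.rename (.keep _ ρ))) (u.rename ρ)
        from rfl, Tm.rename_subst0]
      exact .arr_beta _ _
  | arr_eta t =>
      intro Δ ρ
      have : (Tm.lam (.app (wk1 t) (.var .zero))).rename ρ =
          .lam (.app (wk1 (t.rename ρ)) (.var .zero)) := by
        show Tm.lam (.app ((wk1 t).rename (.keep _ ρ)) (.var .zero)) = _
        rw [Tm.rename_wk1]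
      rw [this]; exact .arr_eta _
  | dia_beta t u =>
      intro Δ ρ
      rw [show (Tm.lett (.ret t) u).rename ρ =
        .lett (.ret (t.rename ρ)) (u.rename (.keep _ ρ)) from rfl, Tm.rename_subst0]
      exact .dia_beta _ _
  | dia_eta t => exact fun ρ => .dia_eta _
  | dia_ass t u u' =>
      intro Δ ρ
      have : (Tm.lett t (.lett u (u'.rename (.keep _ (.drop _ (OPE.id _)))))).rename ρ =
          .lett (t.rename ρ) (.lett (u.rename (.keep _ ρ))
            ((u'.rename (.keep _ ρ)).rename (.keep _ (.drop _ (OPE.id Δ))))) := by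
        show Tm.lett (t.rename ρ) (.lett (u.rename (.keep _ ρ))
          ((u'.rename (.keep _ (.drop _ (OPE.id _)))).rename (.keep _ (.keep _ ρ)))) = _
        rw [Tm.rename_exch]
      rw [this]
      exact .dia_ass _ _ _
/-! ### The term model frame -/

def ctxCat : Category.{0} Ctx where
  Hom := OPE
  id := OPE.id
  comp := fun f g => f.comp g
  id_comp := fun f => OPE.id_comp f
  comp_id := fun f => OPE.comp_id f
  assoc := fun f g h => OPE.comp_assoc f g h

/-- Telescopes of let-bindings: the reachability relation of the term model. -/
inductive Cover : Ctx → Ctx → Type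
  | nil {Γ} : Cover Γ Γ
  | cons {Γ Δ} {A : Ty} : Tm Γ (.dia A) → Cover (A :: Γ) Δ → Cover Γ Δ

def Cover.incl : ∀ {Γ Δ}, Cover Γ Δ → OPE Γ Δ
  | _, _, .nil => OPE.id _
  | _, _, .cons (A := A) _ k => (OPE.drop A (OPE.id _)).comp k.incl

def Cover.trans : ∀ {Γ Δ Θ}, Cover Γ Δ → Cover Δ Θ → Cover Γ Θ
  | _, _, _, .nil, k₂ => k₂
  | _, _, _, .cons c k, k₂ => .cons c (k.trans k₂)

def Cover.fw : ∀ {Γ Γ' Δ}, OPE Γ Γ' → Cover Γ Δ → Ctx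
  | _, Γ', _, _, .nil => Γ'
  | _, _, _, ρ, .cons (A := A) _ k => Cover.fw (.keep A ρ) k

def Cover.f1 : ∀ {Γ Γ' Δ} (ρ : OPE Γ Γ') (k : Cover Γ Δ), Cover Γ' (Cover.fw ρ k)
  | _, _, _, _, .nil => .nil
  | _, _, _, ρ, .cons (A := A) c k => .cons (c.rename ρ) (Cover.f1 (.keep A ρ) k)

def Cover.f2 : ∀ {Γ Γ' Δ} (ρ : OPE Γ Γ') (k : Cover Γ Δ), OPE Δ (Cover.fw ρ k)
  | _, _, _, ρ, .nil => ρ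
  | _, _, _, ρ, .cons (A := A) _ k => Cover.f2 (.keep A ρ) k

/-- Wrapping a term in the let-bindings of a cover. -/
def Cover.readback : ∀ {Γ Δ} {B : Ty}, Cover Γ Δ → Tm Δ (.dia B) → Tm Γ (.dia B)
  | _, _, _, .nil, t => t
  | _, _, _, .cons c k, t => .lett c (Cover.readback k t)

theorem sigma_triple {α : Type _} {P Q : α → Type _} {a₁ a₂ : α} {b₁ : P a₁} {b₂ : P a₂}
    {c₁ : Q a₁} {c₂ : Q a₂} (h : (⟨a₁, b₁, c₁⟩ : Σ a, P a × Q a) = ⟨a₂, b₂, c₂⟩) :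
    a₁ = a₂ ∧ HEq b₁ b₂ ∧ HEq c₁ c₂ := by
  have ha : a₁ = a₂ := congrArg Sigma.fst h
  subst ha
  have hp : (b₁, c₁) = (b₂, c₂) := by
    injection h with h1 h2
  exact ⟨rfl, heq_of_eq (congrArg Prod.fst hp), heq_of_eq (congrArg Prod.snd hp)⟩

theorem Cover.fact_id : ∀ {Γ Δ} (k : Cover Γ Δ),
    (⟨Cover.fw (OPE.id Γ) k, Cover.f1 (OPE.id Γ) k, Cover.f2 (OPE.id Γ) k⟩ :
      Σ Θ, Cover Γ Θ × OPE Δ Θ) = ⟨Δ, k, OPE.id Δ⟩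
  | _, _, .nil => rfl
  | Γ, Δ, .cons (A := A) c k => by
      have ih := Cover.fact_id k
      have := congrArg
        (fun p : Σ Θ, Cover (A :: Γ) Θ × OPE Δ Θ =>
          (⟨p.1, .cons c p.2.1, p.2.2⟩ : Σ Θ, Cover Γ Θ × OPE Δ Θ)) ih
      dsimp only [OPE.id] at this
      simpa [Cover.fw, Cover.f1, Cover.f2, Tm.rename_id] using this

theorem Cover.fact_comp : ∀ {Γ Γ' Γ'' Δ} (ρ : OPE Γ Γ') (ρ' : OPE Γ' Γ'') (k : Cover Γ Δ),
    (⟨Cover.fw (ρ.comp ρ') k, Cover.f1 (ρ.comp ρ') k, Cover.f2 (ρ.comp ρ') k⟩ :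
      Σ Θ, Cover Γ'' Θ × OPE Δ Θ) =
    ⟨Cover.fw ρ' (Cover.f1 ρ k), Cover.f1 ρ' (Cover.f1 ρ k),
      (Cover.f2 ρ k).comp (Cover.f2 ρ' (Cover.f1 ρ k))⟩
  | _, _, _, _, ρ, ρ', .nil => rfl
  | Γ, Γ', Γ'', Δ, ρ, ρ', .cons (A := A) c k => by
      have ih := Cover.fact_comp (.keep A ρ) (.keep A ρ') k
      have := congrArg
        (fun p : Σ Θ, Cover (A :: Γ'') Θ × OPE Δ Θ =>
          (⟨p.1, .cons (c.rename (ρ.comp ρ')) p.2.1, p.2.2⟩ : Σ Θ, Cover Γ'' Θ × OPE Δ Θ)) ih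
      rw [show (OPE.keep A ρ).comp (OPE.keep A ρ') = OPE.keep A (ρ.comp ρ') from rfl] at this
      simpa [Cover.fw, Cover.f1, Cover.f2, OPE.comp, Tm.rename_comp] using this

theorem Cover.fact_trans : ∀ {Γ Γ' Δ Θ} (ρ : OPE Γ Γ') (k₁ : Cover Γ Δ) (k₂ : Cover Δ Θ),
    (⟨Cover.fw ρ (k₁.trans k₂), Cover.f1 ρ (k₁.trans k₂), Cover.f2 ρ (k₁.trans k₂)⟩ :
      Σ Ξ, Cover Γ' Ξ × OPE Θ Ξ) =
    ⟨Cover.fw (Cover.f2 ρ k₁) k₂,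
      (Cover.f1 ρ k₁).trans (Cover.f1 (Cover.f2 ρ k₁) k₂),
      Cover.f2 (Cover.f2 ρ k₁) k₂⟩
  | _, _, _, _, ρ, .nil, k₂ => rfl
  | Γ, Γ', Δ, Θ, ρ, .cons (A := A) c k, k₂ => by
      have ih := Cover.fact_trans (.keep A ρ) k k₂
      have := congrArg
        (fun p : Σ Ξ, Cover (A :: Γ') Ξ × OPE Θ Ξ =>
          (⟨p.1, .cons (c.rename ρ) p.2.1, p.2.2⟩ : Σ Ξ, Cover Γ' Ξ × OPE Θ Ξ)) ih
      simpa [Cover.fw, Cover.f1, Cover.f2, Cover.trans] using this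

theorem Cover.incl_natural : ∀ {Γ Γ' Δ} (ρ : OPE Γ Γ') (k : Cover Γ Δ),
    k.incl.comp (Cover.f2 ρ k) = ρ.comp (Cover.f1 ρ k).incl
  | _, _, _, ρ, .nil => by
      simp [Cover.incl, Cover.f1, Cover.f2, OPE.id_comp, OPE.comp_id]
      exact (OPE.id_comp _).trans (OPE.comp_id _).symm
  | Γ, Γ', Δ, ρ, .cons (A := A) c k => by
      show ((OPE.drop A (OPE.id Γ)).comp k.incl).comp (Cover.f2 (.keep A ρ) k) =
        ρ.comp ((OPE.drop A (OPE.id Γ')).comp (Cover.f1 (.keep A ρ) k).incl)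
      rw [OPE.comp_assoc, Cover.incl_natural (.keep A ρ) k, ← OPE.comp_assoc,
        ← OPE.comp_assoc]
      congr 1
      simp [OPE.comp, OPE.id_comp, OPE.comp_id]

theorem Cover.trans_nil : ∀ {Γ Δ} (k : Cover Γ Δ), k.trans .nil = k
  | _, _, .nil => rfl
  | _, _, .cons c k => by simp [Cover.trans, Cover.trans_nil k]

theorem Cover.trans_assoc : ∀ {Γ Δ Θ Ξ} (k₁ : Cover Γ Δ) (k₂ : Cover Δ Θ) (k₃ : Cover Θ Ξ),
    (k₁.trans k₂).trans k₃ = k₁.trans (k₂.trans k₃)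
  | _, _, _, _, .nil, _, _ => rfl
  | _, _, _, _, .cons c k, k₂, k₃ => by simp [Cover.trans, Cover.trans_assoc k k₂ k₃]

theorem Cover.incl_trans : ∀ {Γ Δ Θ} (k₁ : Cover Γ Δ) (k₂ : Cover Δ Θ),
    (k₁.trans k₂).incl = k₁.incl.comp k₂.incl
  | _, _, _, .nil, k₂ => by simp [Cover.trans, Cover.incl, OPE.id_comp]
  | _, _, _, .cons c k, k₂ => by
      show (OPE.drop _ (OPE.id _)).comp (k.trans k₂).incl =
        ((OPE.drop _ (OPE.id _)).comp k.incl).comp k₂.incl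
      rw [Cover.incl_trans k k₂, OPE.comp_assoc]

/-- The term-model frame. -/
def termFrame : MLCFrame where
  W := Ctx
  instCat := ctxCat
  R := Cover
  incl := Cover.incl
  factorW := Cover.fw
  factor₁ := Cover.f1
  factor₂ := Cover.f2
  reflR := fun _ => Cover.nil
  transR := Cover.trans
  factorW_id := fun m => (sigma_triple (Cover.fact_id m)).1
  factor₁_id := fun m => (sigma_triple (Cover.fact_id m)).2.1
  factor₂_id := fun m => (sigma_triple (Cover.fact_id m)).2.2
  factorW_comp := fun i j m => (sigma_triple (Cover.fact_comp i j m)).1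
  factor₁_comp := fun i j m => (sigma_triple (Cover.fact_comp i j m)).2.1
  factor₂_comp := fun i j m => (sigma_triple (Cover.fact_comp i j m)).2.2
  incl_natural := fun i m => Cover.incl_natural i m
  factorW_refl := fun _ => rfl
  factor₁_refl := fun _ => HEq.rfl
  factor₂_refl := fun _ => HEq.rfl
  incl_refl := fun _ => rfl
  factorW_trans := fun i m₁ m₂ => (sigma_triple (Cover.fact_trans i m₁ m₂)).1
  factor₁_trans := fun i m₁ m₂ => (sigma_triple (Cover.fact_trans i m₁ m₂)).2.1
  factor₂_trans := fun i m₁ m₂ => (sigma_triple (Cover.fact_trans i m₁ m₂)).2.2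
  transR_assoc := Cover.trans_assoc
  transR_refl_left := fun m => rfl
  transR_refl_right := Cover.trans_nil
  incl_trans := Cover.incl_trans

/-- The valuation presheaf of the term model: base-type terms. -/
def termVal : termFrame.W ⥤ Type where
  obj := fun Γ => Tm Γ .base
  map := fun ρ => TypeCat.ofHom (fun t => t.rename ρ)
  map_id := fun Γ => by ext t; exact Tm.rename_id t
  map_comp := fun ρ ρ' => by ext t; exact (Tm.rename_comp ρ ρ' t).symm
/-! ### The logical relation, reify and reflect -/

instance : Category.{0} Ctx := ctxCat

def toHom {Γ Δ : Ctx} (ρ : OPE Γ Δ) : Γ ⟶ Δ := ρ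

def ofHom {Γ Δ : Ctx} (ρ : Γ ⟶ Δ) : OPE Γ Δ := ρ

theorem Cover.readback_congr : ∀ {Γ Δ} {B : Ty} (k : Cover Γ Δ) {s s' : Tm Δ (.dia B)},
    EqTm s s' → EqTm (k.readback s) (k.readback s')
  | _, _, _, .nil, _, _, h => h
  | _, _, _, .cons c k, _, _, h => .lett_congr (.refl c) (Cover.readback_congr k h)

theorem Cover.readback_rename : ∀ {Γ Γ' Δ} {B : Ty} (ρ : OPE Γ Γ') (k : Cover Γ Δ)
    (s : Tm Δ (.dia B)),
    (k.readback s).rename ρ = (Cover.f1 ρ k).readback (s.rename (Cover.f2 ρ k))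
  | _, _, _, _, ρ, .nil, s => rfl
  | _, _, _, _, ρ, .cons (A := A) c k, s => by
      show Tm.lett (c.rename ρ) ((k.readback s).rename (.keep A ρ)) = _
      rw [Cover.readback_rename (.keep A ρ) k s]; rfl

/-- The Kripke logical relation between semantic values (in the term model) and terms. -/
def LR : ∀ (A : Ty) {Γ : Ctx}, evalTy termFrame termVal A Γ → Tm Γ A → Prop
  | .base, _, a, t => EqTm a t
  | .unit, _, _, _ => True
  | .prod A B, _, a, t => LR A a.1 (.fst t) ∧ LR B a.2 (.snd t)
  | .arr A B, Γ, f, t => ∀ {Δ : Ctx} (ρ : OPE Γ Δ) (a : evalTy termFrame termVal A Δ)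
      (u : Tm Δ A), LR A a u → LR B (f Δ (toHom ρ) a) (.app (t.rename ρ) u)
  | .dia A, Γ, d, t => ∃ v : Tm d.1 A, LR A d.2.2 v ∧
      EqTm t (Cover.readback d.2.1 (.ret v))

mutual
def reflect : ∀ (A : Ty) {Γ : Ctx}, Tm Γ A → evalTy termFrame termVal A Γ
  | .base, _, t => t
  | .unit, _, _ => PUnit.unit
  | .prod A B, _, t => (reflect A (.fst t), reflect B (.snd t))
  | .arr A B, _, t => fun _ ρ a => reflect B (.app (t.rename (ofHom ρ)) (reify A a))
  | .dia A, Γ, t => ⟨A :: Γ, Cover.cons t Cover.nil, reflect A (.var .zero)⟩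

def reify : ∀ (A : Ty) {Γ : Ctx}, evalTy termFrame termVal A Γ → Tm Γ A
  | .base, _, a => a
  | .unit, _, _ => .unit
  | .prod A B, _, a => .pair (reify A a.1) (reify B a.2)
  | .arr A B, Γ, f =>
      .lam (reify B (f (A :: Γ) (toHom (.drop A (OPE.id Γ))) (reflect A (.var .zero))))
  | .dia A, _, d => Cover.readback d.2.1 (.ret (reify A d.2.2))
end

/-- The logical relation respects the equational theory in its term argument. -/
theorem LR.resp : ∀ (A : Ty) {Γ : Ctx} {a : evalTy termFrame termVal A Γ} {t t' : Tm Γ A},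
    LR A a t → EqTm t t' → LR A a t'
  | .base, _, a, t, t', h, e => h.trans e
  | .unit, _, _, _, _, _, _ => trivial
  | .prod A B, _, a, t, t', h, e =>
      ⟨LR.resp A h.1 (.fst_congr e), LR.resp B h.2 (.snd_congr e)⟩
  | .arr A B, _, f, t, t', h, e => fun ρ a u hu =>
      LR.resp B (h ρ a u hu) (.app_congr (e.rename ρ) (.refl u))
  | .dia A, _, d, t, t', ⟨v, hv, ht⟩, e => ⟨v, hv, e.symm.trans ht⟩

/-- Monotonicity of the logical relation along embeddings. -/
theorem LR.mono : ∀ (A : Ty) {Γ Δ : Ctx} (ρ : OPE Γ Δ) {a : evalTy termFrame termVal A Γ}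
    {t : Tm Γ A}, LR A a t → LR A (tpTy termFrame termVal A (toHom ρ) a) (t.rename ρ)
  | .base, _, _, ρ, a, t, h => h.rename ρ
  | .unit, _, _, _, _, _, _ => trivial
  | .prod A B, _, _, ρ, a, t, h => ⟨LR.mono A ρ h.1, LR.mono B ρ h.2⟩
  | .arr A B, _, _, ρ, f, t, h => by
      intro ρ' a u hu
      have := h (ρ.comp ρ') a u hu
      rw [← Tm.rename_comp] at this
      exact this
  | .dia A, _, _, ρ, d, t, h => by
      obtain ⟨v, hv, ht⟩ := h
      refine ⟨v.rename (Cover.f2 ρ d.2.1), LR.mono A _ hv, ?_⟩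
      have := ht.rename ρ
      rwa [Cover.readback_rename ρ d.2.1] at this

mutual
theorem reflect_rel : ∀ (A : Ty) {Γ : Ctx} (n : Tm Γ A), LR A (reflect A n) n
  | .base, _, n => .refl n
  | .unit, _, _ => trivial
  | .prod A B, _, n => ⟨reflect_rel A (.fst n), reflect_rel B (.snd n)⟩
  | .arr A B, _, n => by
      intro ρ a u hu
      have h1 := reflect_rel B (.app (n.rename ρ) (reify A a))
      exact LR.resp B h1 (.app_congr (.refl _) ((reify_rel A a u hu).symm))
  | .dia A, _, n =>
      ⟨.var .zero, reflect_rel A (.var .zero), .dia_eta n⟩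

theorem reify_rel : ∀ (A : Ty) {Γ : Ctx} (a : evalTy termFrame termVal A Γ) (t : Tm Γ A),
    LR A a t → EqTm t (reify A a)
  | .base, _, a, t, h => h.symm
  | .unit, _, _, t, _ => .unit_eta t
  | .prod A B, _, a, t, h =>
      (EqTm.prod_eta t).trans
        (.pair_congr (reify_rel A a.1 _ h.1) (reify_rel B a.2 _ h.2))
  | .arr A B, Γ, f, t, h => by
      have h1 := h (.drop A (OPE.id Γ)) (reflect A (.var .zero)) (.var .zero)
        (reflect_rel A (.var .zero))
      have h2 := reify_rel B _ _ h1
      exact (EqTm.arr_eta t).trans (.lam_congr h2)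
  | .dia A, _, d, t, h => by
      obtain ⟨v, hv, ht⟩ := h
      exact ht.trans (Cover.readback_congr d.2.1 (.ret_congr (reify_rel A d.2.2 v hv)))
end
/-! ### The fundamental lemma and completeness -/

theorem Tm.rename_eq_subst {Γ Δ : Ctx} {A : Ty} (ρ : OPE Γ Δ) (t : Tm Γ A) :
    t.rename ρ = t.subst (fun _ x => .var (ρ.var x)) := by
  conv_lhs => rw [← Tm.subst_id (t.rename ρ)]
  rw [Tm.ren_sub]
  rfl

/-- Extending a substitution with a term. -/
def Subst.scons {Γ Δ : Ctx} {A : Ty} (u : Tm Δ A) (σ : Subst Γ Δ) : Subst (A :: Γ) Δ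
  | _, .zero => u
  | _, .succ y => σ _ y

theorem subst0_rename_lift {Γ Δ Δ' : Ctx} {A B : Ty} (σ : Subst Γ Δ) (ρ : OPE Δ Δ')
    (u : Tm Δ' A) (t : Tm (A :: Γ) B) :
    subst0 u ((t.subst (σ.lift A)).rename (.keep A ρ)) =
      t.subst (Subst.scons u (fun C x => (σ C x).rename ρ)) := by
  unfold subst0
  erw [Tm.sub_ren, Tm.sub_sub]
  congr 1; funext C x
  cases x with
  | zero => rfl
  | succ y =>
      show (((σ _ y).rename (.drop A (OPE.id Δ))).rename (.keep A ρ)).subst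
        (Subst.single u) = (σ _ y).rename ρ
      erw [Tm.rename_comp, Tm.ren_sub]
      have : (fun (C : Ty) (x : Var Δ C) =>
          Subst.single u C (((OPE.drop A (OPE.id Δ)).comp (.keep A ρ)).var x)) =
          (fun (C : Ty) (x : Var Δ C) => (Tm.var (ρ.var x) : Tm Δ' C)) := by
        funext C x
        simp [OPE.comp, OPE.var, OPE.id_comp, OPE.var_comp, OPE.var_id, Subst.single]
      rw [this, ← Tm.rename_eq_subst]

theorem Cover.readback_trans : ∀ {Γ Δ Θ} {B : Ty} (k₁ : Cover Γ Δ) (k₂ : Cover Δ Θ)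
    (s : Tm Θ (.dia B)),
    (k₁.trans k₂).readback s = k₁.readback (k₂.readback s)
  | _, _, _, _, .nil, _, _ => rfl
  | _, _, _, _, .cons c k, k₂, s => by
      show Tm.lett c ((k.trans k₂).readback s) = .lett c (k.readback (k₂.readback s))
      rw [Cover.readback_trans k k₂ s]

theorem Cover.lett_readback : ∀ {Γ Δ : Ctx} {A B : Ty} (k : Cover Γ Δ) (s : Tm Δ (.dia A))
    (X : Tm (A :: Γ) (.dia B)),
    EqTm (.lett (k.readback s) X) (k.readback (.lett s (X.rename (.keep A k.incl))))
  | Γ, _, A, _, .nil, s, X => by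
      show EqTm (Tm.lett s X) (.lett s (X.rename (.keep A (OPE.id Γ))))
      rw [show OPE.keep A (OPE.id Γ) = OPE.id (A :: Γ) from rfl, Tm.rename_id]
      exact .refl _
  | Γ, Δ, A, B, .cons (A := C) c k, s, X => by
      show EqTm (Tm.lett (.lett c (k.readback s)) X) _
      have h1 := EqTm.dia_ass c (k.readback s) X
      have h2 := Cover.lett_readback k s (X.rename (.keep A (.drop C (OPE.id Γ))))
      refine h1.trans (EqTm.trans (.lett_congr (.refl c) h2) ?_)
      show EqTm (Tm.lett c (k.readback (.lett s ((X.rename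
        (.keep A (.drop C (OPE.id Γ)))).rename (.keep A k.incl))))) _
      rw [Tm.rename_comp]
      exact .refl _

/-- The logical relation on environments. -/
def LRCtx : ∀ (Γ : Ctx) {Δ : Ctx}, evalCtx termFrame termVal Γ Δ → Subst Γ Δ → Prop
  | [], _, _, _ => True
  | A :: Γ, _, γ, σ =>
      LRCtx Γ γ.1 (fun B x => σ B (.succ x)) ∧ LR A γ.2 (σ A .zero)

theorem LRCtx.mono : ∀ (Γ : Ctx) {Δ Δ' : Ctx} (ρ : OPE Δ Δ')
    {γ : evalCtx termFrame termVal Γ Δ} {σ : Subst Γ Δ}, LRCtx Γ γ σ →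
    LRCtx Γ (tpCtx termFrame termVal Γ (toHom ρ) γ) (fun B x => (σ B x).rename ρ)
  | [], _, _, _, _, _, _ => trivial
  | A :: Γ, _, _, ρ, γ, σ, h => ⟨LRCtx.mono Γ ρ h.1, LR.mono A ρ h.2⟩

theorem LR_var : ∀ {Γ : Ctx} {A : Ty} (x : Var Γ A) {Δ : Ctx}
    {γ : evalCtx termFrame termVal Γ Δ} {σ : Subst Γ Δ}, LRCtx Γ γ σ →
    LR A (evalVar termFrame termVal x γ) (σ A x)
  | _, _, .zero, _, _, _, h => h.2
  | _, _, .succ x, _, _, _, h => LR_var x h.1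

theorem fundamental : ∀ {Γ : Ctx} {A : Ty} (t : Tm Γ A) {Δ : Ctx}
    (γ : evalCtx termFrame termVal Γ Δ) (σ : Subst Γ Δ), LRCtx Γ γ σ →
    LR A (evalTm termFrame termVal t Δ γ) (t.subst σ)
  | _, _, .var x, _, γ, σ, h => LR_var x h
  | _, _, .unit, _, γ, σ, h => trivial
  | _, _, .pair t u, _, γ, σ, h =>
      ⟨LR.resp _ (fundamental t γ σ h) (.symm (.prod_beta1 _ _)),
       LR.resp _ (fundamental u γ σ h) (.symm (.prod_beta2 _ _))⟩
  | _, _, .fst t, _, γ, σ, h => (fundamental t γ σ h).1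
  | _, _, .snd t, _, γ, σ, h => (fundamental t γ σ h).2
  | _, _, .lam (A := A) (B := B) t, Δ, γ, σ, h => by
      intro ρ a u hu
      have henv : LRCtx (A :: _) (tpCtx termFrame termVal _ (toHom ρ) γ, a)
          (Subst.scons u (fun C x => (σ C x).rename ρ)) :=
        ⟨LRCtx.mono _ ρ h, hu⟩
      have ih := fundamental t _ _ henv
      refine LR.resp B ih (EqTm.symm ?_)
      have hb := EqTm.arr_beta ((t.subst (σ.lift A)).rename (.keep A ρ)) u
      rw [subst0_rename_lift] at hb
      exact hb
  | _, _, .app t u, Δ, γ, σ, h => by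
      have ih := fundamental t γ σ h (OPE.id Δ) _ _ (fundamental u γ σ h)
      rwa [Tm.rename_id] at ih
  | _, _, .ret t, _, γ, σ, h => ⟨t.subst σ, fundamental t γ σ h, .refl _⟩
  | _, _, .lett (A := A) (B := B) t u, Δ, γ, σ, h => by
      obtain ⟨v, hv, ht⟩ := fundamental t γ σ h
      have henv : LRCtx (A :: _)
          (tpCtx termFrame termVal _
            (toHom (evalTm termFrame termVal t Δ γ).2.1.incl) γ,
            (evalTm termFrame termVal t Δ γ).2.2)
          (Subst.scons v
            (fun C y => (σ C y).rename (evalTm termFrame termVal t Δ γ).2.1.incl)) :=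
        ⟨LRCtx.mono _ _ h, hv⟩
      obtain ⟨w, hw, hu⟩ := fundamental u _ _ henv
      refine ⟨w, hw, ?_⟩
      have e1 : EqTm ((Tm.lett t u).subst σ)
          (.lett (Cover.readback (evalTm termFrame termVal t Δ γ).2.1 (.ret v))
            (u.subst (σ.lift A))) :=
        .lett_congr ht (.refl _)
      have e2 := Cover.lett_readback (evalTm termFrame termVal t Δ γ).2.1 (.ret v)
        (u.subst (σ.lift A))
      have e3 : EqTm (Tm.lett (.ret v) ((u.subst (σ.lift A)).rename
            (.keep A (evalTm termFrame termVal t Δ γ).2.1.incl)))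
          (u.subst (Subst.scons v
            (fun C y => (σ C y).rename (evalTm termFrame termVal t Δ γ).2.1.incl))) := by
        have hb := EqTm.dia_beta v ((u.subst (σ.lift A)).rename
          (.keep A (evalTm termFrame termVal t Δ γ).2.1.incl))
        erw [subst0_rename_lift] at hb; exact hb
      have final : EqTm ((Tm.lett t u).subst σ)
          (Cover.readback ((evalTm termFrame termVal t Δ γ).2.1.trans
            (evalTm termFrame termVal u _ (tpCtx termFrame termVal _
              (toHom (evalTm termFrame termVal t Δ γ).2.1.incl) γ,
              (evalTm termFrame termVal t Δ γ).2.2)).2.1) (.ret w)) := by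
        erw [Cover.readback_trans]
        exact e1.trans (e2.trans ((Cover.readback_congr _ e3).trans
          (Cover.readback_congr _ hu)))
      exact final

/-- The identity environment, built from reflected variables. -/
def idEnv : ∀ Γ : Ctx, evalCtx termFrame termVal Γ Γ
  | [] => PUnit.unit
  | A :: Γ => (tpCtx termFrame termVal Γ (toHom (.drop A (OPE.id Γ))) (idEnv Γ),
      reflect A (.var .zero))

theorem idEnv_rel : ∀ Γ : Ctx, LRCtx Γ (idEnv Γ) (Subst.idS Γ)
  | [] => trivial
  | A :: Γ => by
      refine ⟨?_, reflect_rel A (.var .zero)⟩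
      have h := LRCtx.mono Γ (.drop A (OPE.id Γ)) (idEnv_rel Γ)
      have e : (fun (B : Ty) (x : Var Γ B) =>
          (Subst.idS Γ B x).rename (.drop A (OPE.id Γ))) =
          (fun (B : Ty) (x : Var Γ B) => Subst.idS (A :: Γ) B (.succ x)) := by
        funext B x
        simp [Subst.idS, Tm.rename, OPE.var, OPE.var_id]
      rwa [e] at h
/-- completeness of proof-relevant possible-world semantics for
MLC: if `⟦t⟧ = ⟦u⟧` holds in every proof-relevant possible-world model
determined by an MLC-frame, then `Γ ⊢ t ≡ u : A` in the equational theory of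
MLC. -/
theorem completeness_possible_world_semantics {Γ : Ctx} {A : Ty} (t u : Tm Γ A)
    (h : ∀ (F : MLCFrame) (Vι : F.W ⥤ Type) (w : F.W) (γ : evalCtx F Vι Γ w),
      evalTm F Vι t w γ = evalTm F Vι u w γ) :
    EqTm t u := by
  have h1 := fundamental t (idEnv Γ) (Subst.idS Γ) (idEnv_rel Γ)
  have h2 := fundamental u (idEnv Γ) (Subst.idS Γ) (idEnv_rel Γ)
  rw [Tm.subst_id] at h1 h2
  have e := h termFrame termVal Γ (idEnv Γ)
  rw [e] at h1
  exact (reify_rel A _ t h1).trans (reify_rel A _ u h2).symm
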